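/- Let G be a profinite group and M a profinite abelian G-module, with C = C_G(M) the kernel of the action. Suppose (1) pM + M(G-1) ≠ M, (2) the intersection over all g ∈ G \ C of the submodules M(g-1) is zero, and (3) for every nonzero a ∈ M, the stabilizer C_G(a) equals C. Then M is a pro-p group. -/

import Mathlib

open Pointwise

set_option linter.unusedSectionVars false

section Stmt8Aux

variable {G : Type*} [Group G] [TopologicalSpace G] [IsTopologicalGroup G] [CompactSpace G]
variable {M : Type*} [AddCommGroup M] [TopologicalSpace M] [IsTopologicalAddGroup M]
  [CompactSpace M] [TotallyDisconnectedSpace M] [T2Space M]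
variable [DistribMulAction G M] [ContinuousSMul G M]

/-- Open additive subgroups form a neighborhood basis of `0` in a profinite abelian group. -/
theorem stmt8_exists_openAddSubgroup_subset {V : Set M} (hV : V ∈ nhds (0 : M)) :
    ∃ Ω : AddSubgroup M, IsOpen (Ω : Set M) ∧ (Ω : Set M) ⊆ V := by
  obtain ⟨U, hUV, hUopen, hU0⟩ := mem_nhds_iff.mp hV
  obtain ⟨Z, hZclopen, hZ0, hZU⟩ := compact_exists_isClopen_in_isOpen hUopen hU0
  obtain ⟨H, hH⟩ :=
    IsTopologicalAddGroup.exist_openAddSubgroup_sub_clopen_nhds_of_zero hZclopen hZ0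
  exact ⟨H.toAddSubgroup, H.isOpen, hH.trans (hZU.trans hUV)⟩

/-- Every open subgroup of `M` contains a `G`-invariant open subgroup. -/
theorem stmt8_exists_invariant_open_le (Ω : AddSubgroup M) (hΩ : IsOpen (Ω : Set M)) :
    ∃ Ω' : AddSubgroup M, IsOpen (Ω' : Set M) ∧ Ω' ≤ Ω ∧
      ∀ (g : G), ∀ x ∈ Ω', g • x ∈ Ω' := by
  have hcont : Continuous fun z : G × M => z.1 • z.2 := continuous_smul
  have key : ∀ h : G, ∃ (u : Set G) (v : Set M), IsOpen u ∧ IsOpen v ∧ h ∈ u ∧ (0 : M) ∈ v ∧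
      ∀ g ∈ u, ∀ x ∈ v, g • x ∈ Ω := by
    intro h
    have hmem : ((h, (0 : M)) : G × M) ∈ (fun z : G × M => z.1 • z.2) ⁻¹' (Ω : Set M) := by
      simp only [Set.mem_preimage, smul_zero]
      exact Ω.zero_mem
    obtain ⟨u, v, hu, hv, hh, h0, huv⟩ :=
      isOpen_prod_iff.mp (hcont.isOpen_preimage _ hΩ) h 0 hmem
    exact ⟨u, v, hu, hv, hh, h0, fun g hg x hx => huv (Set.mk_mem_prod hg hx)⟩
  choose u v hu hv hmemu hmemv hprop using key
  obtain ⟨t, ht⟩ := IsCompact.elim_finite_subcover isCompact_univ u hu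
    (fun g _ => Set.mem_iUnion.mpr ⟨g, hmemu g⟩)
  have hVopen : IsOpen (⋂ h ∈ t, v h) := isOpen_biInter_finset fun h _ => hv h
  have hV0 : (0 : M) ∈ ⋂ h ∈ t, v h := Set.mem_iInter₂.mpr fun h _ => hmemv h
  have hVprop : ∀ (g : G), ∀ x ∈ ⋂ h ∈ t, v h, g • x ∈ Ω := by
    intro g x hx
    obtain ⟨h, hht, hgu⟩ := Set.mem_iUnion₂.mp (ht (Set.mem_univ g))
    exact hprop h g hgu x (Set.mem_iInter₂.mp hx h hht)
  obtain ⟨Ω₂, hΩ₂open, hΩ₂sub⟩ := stmt8_exists_openAddSubgroup_subset (hVopen.mem_nhds hV0)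
  refine ⟨AddSubgroup.closure (⋃ g : G, g • (Ω₂ : Set M)), ?_, ?_, ?_⟩
  · refine AddSubgroup.isOpen_mono (H₁ := Ω₂) ?_ hΩ₂open
    intro x hx
    exact AddSubgroup.subset_closure (Set.mem_iUnion.mpr ⟨1, ⟨x, hx, one_smul _ _⟩⟩)
  · rw [AddSubgroup.closure_le]
    rintro x hx
    obtain ⟨g, hgx⟩ := Set.mem_iUnion.mp hx
    obtain ⟨y, hy, rfl⟩ := hgx
    exact hVprop g y (hΩ₂sub hy)
  · intro g x hx
    have hmap : (AddSubgroup.closure (⋃ h : G, h • (Ω₂ : Set M))).map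
        (DistribMulAction.toAddMonoidHom M g) ≤
        AddSubgroup.closure (⋃ h : G, h • (Ω₂ : Set M)) := by
      rw [AddMonoidHom.map_closure]
      apply AddSubgroup.closure_mono
      rintro z hz
      obtain ⟨w, hw, rfl⟩ := hz
      obtain ⟨h, hhw⟩ := Set.mem_iUnion.mp hw
      obtain ⟨y, hy, rfl⟩ := hhw
      refine Set.mem_iUnion.mpr ⟨g * h, ⟨y, hy, ?_⟩⟩
      simp [DistribMulAction.toAddMonoidHom, mul_smul]
    exact hmap (AddSubgroup.mem_map_of_mem _ hx)

/-- Any nonzero element is avoided by some `G`-invariant open subgroup. -/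
theorem stmt8_exists_invariant_open_not_mem {x : M} (hx : x ≠ 0) :
    ∃ Ω : AddSubgroup M, IsOpen (Ω : Set M) ∧ (∀ (g : G), ∀ y ∈ Ω, g • y ∈ Ω) ∧ x ∉ Ω := by
  have hmem : ({x}ᶜ : Set M) ∈ nhds (0 : M) :=
    isOpen_compl_singleton.mem_nhds (by simpa using (Ne.symm hx))
  obtain ⟨Ω₀, h₀, hsub⟩ := stmt8_exists_openAddSubgroup_subset hmem
  obtain ⟨Ω, hopen, hle, hinvt⟩ := stmt8_exists_invariant_open_le (G := G) Ω₀ h₀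
  exact ⟨Ω, hopen, hinvt, fun hxm => (hsub (hle hxm)) rfl⟩

/-- The pointwise kernel of the `G`-action on `M ⧸ Ω`. -/
def stmt8Ker (G : Type*) [Group G] (M : Type*) [AddCommGroup M] [DistribMulAction G M]
    (Ω : AddSubgroup M) : Subgroup G where
  carrier := {h : G | ∀ b : M, h • b - b ∈ Ω}
  one_mem' := fun b => by simpa using Ω.zero_mem
  mul_mem' := by
    intro h₁ h₂ H1 H2 b
    have e : (h₁ * h₂) • b - b = (h₁ • (h₂ • b) - h₂ • b) + (h₂ • b - b) := by
      rw [mul_smul]; abel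
    rw [e]; exact Ω.add_mem (H1 _) (H2 _)
  inv_mem' := by
    intro h H b
    have e : h⁻¹ • b - b = -(h • (h⁻¹ • b) - h⁻¹ • b) := by
      rw [smul_inv_smul]; abel
    rw [e]; exact Ω.neg_mem (H _)

theorem stmt8Ker_mem_iff {G : Type*} [Group G] {M : Type*} [AddCommGroup M]
    [DistribMulAction G M] {Ω : AddSubgroup M} {h : G} :
    h ∈ stmt8Ker G M Ω ↔ ∀ b : M, h • b - b ∈ Ω := Iff.rfl

theorem stmt8Ker_normal (Ω : AddSubgroup M) (hinvt : ∀ (g : G), ∀ x ∈ Ω, g • x ∈ Ω) :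
    (stmt8Ker G M Ω).Normal := by
  constructor
  intro h hh c
  rw [stmt8Ker_mem_iff]
  intro b
  have e : (c * h * c⁻¹) • b - b = c • (h • (c⁻¹ • b) - c⁻¹ • b) := by
    rw [smul_sub, mul_smul, mul_smul, smul_inv_smul]
  rw [e]; exact hinvt c _ ((stmt8Ker_mem_iff.mp hh) _)

theorem stmt8Ker_isOpen (Ω : AddSubgroup M) (hΩ : IsOpen (Ω : Set M)) :
    IsOpen ((stmt8Ker G M Ω) : Set G) := by
  apply Subgroup.isOpen_of_one_mem_interior
  have hcont : Continuous fun z : G × M => z.1 • z.2 - z.2 :=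
    continuous_smul.sub continuous_snd
  have key : ∀ b : M, ∃ (u : Set G) (v : Set M), IsOpen u ∧ IsOpen v ∧ (1 : G) ∈ u ∧ b ∈ v ∧
      ∀ g ∈ u, ∀ x ∈ v, g • x - x ∈ Ω := by
    intro b
    have hmem : (((1 : G), b) : G × M) ∈ (fun z : G × M => z.1 • z.2 - z.2) ⁻¹' (Ω : Set M) := by
      simp only [Set.mem_preimage, one_smul, sub_self]
      exact Ω.zero_mem
    obtain ⟨u, v, hu, hv, h1, hb, huv⟩ :=
      isOpen_prod_iff.mp (hcont.isOpen_preimage _ hΩ) 1 b hmem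
    exact ⟨u, v, hu, hv, h1, hb, fun g hg x hx => huv (Set.mk_mem_prod hg hx)⟩
  choose u v hu hv hmemu hmemv hprop using key
  obtain ⟨t, ht⟩ := IsCompact.elim_finite_subcover isCompact_univ v hv
    (fun b _ => Set.mem_iUnion.mpr ⟨b, hmemv b⟩)
  rw [mem_interior]
  refine ⟨⋂ b ∈ t, u b, ?_, isOpen_biInter_finset fun b _ => hu b,
    Set.mem_iInter₂.mpr fun b _ => hmemu b⟩
  intro g hg
  rw [SetLike.mem_coe, stmt8Ker_mem_iff]
  intro x
  obtain ⟨b, hbt, hxv⟩ := Set.mem_iUnion₂.mp (ht (Set.mem_univ x))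
  exact hprop b g (Set.mem_iInter₂.mp hg b hbt) x hxv

theorem stmt8Ker_mono {Ω Ω' : AddSubgroup M} (h : Ω ≤ Ω') :
    stmt8Ker G M Ω ≤ stmt8Ker G M Ω' := fun _ hh b => h (hh b)

/-- Compactness fixed-point lemma. -/
theorem stmt8_fixed_point
    (h3 : ∀ a : M, a ≠ 0 → ∀ g : G, g • a = a → ∀ b : M, g • b = b)
    (v : G) (Ω₀ : AddSubgroup M) (hΩ₀ : IsOpen (Ω₀ : Set M))
    (H : ∀ Ω : AddSubgroup M, IsOpen (Ω : Set M) → (∀ (g : G), ∀ x ∈ Ω, g • x ∈ Ω) →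
      ∃ y, y ∉ Ω₀ ∧ v • y - y ∈ Ω) :
    ∀ b : M, v • b = b := by
  haveI hne : Nonempty {Ω : AddSubgroup M //
      IsOpen (Ω : Set M) ∧ ∀ (g : G), ∀ x ∈ Ω, g • x ∈ Ω} :=
    ⟨⟨⊤, by simpa using isOpen_univ, fun _ x _ => AddSubgroup.mem_top _⟩⟩
  set Z : {Ω : AddSubgroup M // IsOpen (Ω : Set M) ∧ ∀ (g : G), ∀ x ∈ Ω, g • x ∈ Ω} → Set M :=
    fun Ω => {y | y ∉ Ω₀ ∧ v • y - y ∈ Ω.1} with hZ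
  have hZclosed : ∀ i, IsClosed (Z i) := by
    intro i
    have h1 : IsClosed ((Ω₀ : Set M)ᶜ) := hΩ₀.isClosed_compl
    have h2 : IsClosed ((fun y : M => v • y - y) ⁻¹' (i.1 : Set M)) :=
      (AddSubgroup.isClosed_of_isOpen _ i.2.1).preimage
        ((continuous_const_smul v).sub continuous_id)
    exact h1.inter h2
  have hZdir : Directed (· ⊇ ·) Z := by
    intro i j
    have hk1 : IsOpen ((i.1 ⊓ j.1 : AddSubgroup M) : Set M) := by
      simpa [AddSubgroup.coe_inf] using i.2.1.inter j.2.1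
    have hk2 : ∀ (g : G), ∀ x ∈ i.1 ⊓ j.1, g • x ∈ i.1 ⊓ j.1 := by
      intro g x hx
      exact AddSubgroup.mem_inf.mpr ⟨i.2.2 g x (AddSubgroup.mem_inf.mp hx).1,
        j.2.2 g x (AddSubgroup.mem_inf.mp hx).2⟩
    refine ⟨⟨i.1 ⊓ j.1, hk1, hk2⟩, ?_, ?_⟩
    · rintro y ⟨hy1, hy2⟩; exact ⟨hy1, (AddSubgroup.mem_inf.mp hy2).1⟩
    · rintro y ⟨hy1, hy2⟩; exact ⟨hy1, (AddSubgroup.mem_inf.mp hy2).2⟩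
  have hZne : ∀ i, (Z i).Nonempty := by
    intro i
    obtain ⟨y, hy1, hy2⟩ := H i.1 i.2.1 i.2.2
    exact ⟨y, hy1, hy2⟩
  obtain ⟨y, hy⟩ := IsCompact.nonempty_iInter_of_directed_nonempty_isCompact_isClosed
    Z hZdir hZne (fun i => (hZclosed i).isCompact) hZclosed
  have hymem : ∀ i, y ∈ Z i := Set.mem_iInter.mp hy
  have hfix : v • y - y = 0 := by
    by_contra hne0
    obtain ⟨Ω, ho, hi, hnm⟩ := stmt8_exists_invariant_open_not_mem (G := G) hne0
    exact hnm (hymem ⟨Ω, ho, hi⟩).2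
  have hy0 : y ≠ 0 := by
    intro h0
    exact (hymem ⟨⊤, by simpa using isOpen_univ, fun _ x _ => AddSubgroup.mem_top _⟩).1
      (h0 ▸ Ω₀.zero_mem)
  exact h3 y hy0 v (by rwa [sub_eq_zero] at hfix)

theorem stmt8_pow_mem_of_modEq {G' : Type*} [Group G'] {K : Subgroup G'} {g : G'} {m e e' : ℕ}
    (hgm : g ^ m ∈ K) (h : e ≡ e' [MOD m]) : (g ^ e)⁻¹ * g ^ e' ∈ K := by
  obtain ⟨t, ht⟩ := (Nat.modEq_iff_dvd (n := m)).mp h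
  have he : (g ^ e)⁻¹ * g ^ e' = (g ^ (m : ℤ)) ^ t := by
    rw [← zpow_natCast g e, ← zpow_natCast g e', ← zpow_neg, ← zpow_add, ← zpow_mul]
    congr 1
    omega
  rw [he]
  have hm : g ^ (m : ℤ) ∈ K := by rw [zpow_natCast]; exact hgm
  exact K.zpow_mem hm t

theorem stmt8_pow_mem_of_dvd {G' : Type*} [Group G'] {K : Subgroup G'} {g : G'} {m n : ℕ}
    (hgm : g ^ m ∈ K) (h : m ∣ n) : g ^ n ∈ K := by
  obtain ⟨u, rfl⟩ := h
  rw [pow_mul]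
  exact K.pow_mem hgm u

theorem stmt8_inv_pow_mul_pow_mem {G' : Type*} [Group G'] {K : Subgroup G'} (hK : K.Normal)
    {x y : G'} (h : x⁻¹ * y ∈ K) : ∀ t : ℕ, (x ^ t)⁻¹ * y ^ t ∈ K := by
  intro t
  induction t with
  | zero => simpa using K.one_mem
  | succ n ih =>
    have e : (x ^ (n + 1))⁻¹ * y ^ (n + 1) =
        (x⁻¹ * ((x ^ n)⁻¹ * y ^ n) * x⁻¹⁻¹) * (x⁻¹ * y) := by
      group
    rw [e]
    exact K.mul_mem (hK.conj_mem _ ih x⁻¹) h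

theorem stmt8_telescope (w : G) (z : M) (n : ℕ) :
    w • (∑ i ∈ Finset.range n, w ^ i • z) - ∑ i ∈ Finset.range n, w ^ i • z
      = w ^ n • z - z := by
  induction n with
  | zero => simp
  | succ k ih =>
    rw [Finset.sum_range_succ, smul_add]
    have h1 : w • (w ^ k • z) = w ^ (k + 1) • z := by
      rw [← mul_smul, ← pow_succ']
    rw [h1]
    have h2 : w • (∑ i ∈ Finset.range k, w ^ i • z) =
        (∑ i ∈ Finset.range k, w ^ i • z) + (w ^ k • z - z) := by
      rw [← ih]; abel
    rw [h2]; abel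

theorem stmt8_pow_smul_sub_mem (g : G) (a : M) :
    ∀ i : ℕ, g ^ i • a - a ∈ AddSubgroup.closure {w : M | ∃ b : M, w = g • b - b} := by
  intro i
  induction i with
  | zero =>
    simp only [pow_zero, one_smul, sub_self]
    exact (AddSubgroup.closure _).zero_mem
  | succ k ih =>
    have e : g ^ (k + 1) • a - a = (g • (g ^ k • a) - g ^ k • a) + (g ^ k • a - a) := by
      rw [← mul_smul, ← pow_succ']; abel
    rw [e]
    exact AddSubgroup.add_mem _ (AddSubgroup.subset_closure ⟨g ^ k • a, rfl⟩) ih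

theorem stmt8_NT {q m m' e e' : ℕ} (hq : q.Prime) (hm : m ≠ 0) (hm' : m' ≠ 0) (hdvd : m ∣ m')
    (he1 : e ≡ 0 [MOD m / q ^ m.factorization q]) (he2 : e ≡ 1 [MOD q ^ m.factorization q])
    (he1' : e' ≡ 0 [MOD m' / q ^ m'.factorization q])
    (he2' : e' ≡ 1 [MOD q ^ m'.factorization q]) :
    e' ≡ e [MOD m] := by
  have h1 : e' ≡ e [MOD m / q ^ m.factorization q] :=
    (he1'.of_dvd (Nat.ordCompl_dvd_ordCompl_of_dvd hdvd q)).trans he1.symm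
  have h2 : e' ≡ e [MOD q ^ m.factorization q] :=
    (he2'.of_dvd (Nat.ordProj_dvd_ordProj_of_dvd hm' hdvd q)).trans he2.symm
  have co : (q ^ m.factorization q).Coprime (m / q ^ m.factorization q) :=
    Nat.Coprime.pow_left _ (Nat.coprime_ordCompl hq hm)
  have hfin := (Nat.modEq_and_modEq_iff_modEq_mul co).mp ⟨h2, h1⟩
  rwa [Nat.ordProj_mul_ordCompl_eq_self] at hfin

abbrev stmt8Idx (G : Type*) [Group G] (M : Type*) [AddCommGroup M] [TopologicalSpace M]
    [DistribMulAction G M] :=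
  {Ω : AddSubgroup M // IsOpen (Ω : Set M) ∧ ∀ (g : G), ∀ x ∈ Ω, g • x ∈ Ω}

theorem stmt8_order_coprime
    {p q : ℕ} (hp : p.Prime) (hq : q.Prime) (hqp : q ≠ p)
    (W : AddSubgroup M) (hWopen : IsOpen (W : Set M))
    (hWg : ∀ (h : G) (x : M), h • x - x ∈ W) (hWp : ∀ x : M, p • x ∈ W)
    (a₀ : M) (ha₀ : a₀ ∉ W)
    (h3 : ∀ a : M, a ≠ 0 → ∀ g : G, g • a = a → ∀ b : M, g • b = b)
    (g : G) (Ω : AddSubgroup M) (hΩopen : IsOpen (Ω : Set M))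
    (hΩinvt : ∀ (h : G), ∀ x ∈ Ω, h • x ∈ Ω) :
    ∃ m : ℕ, 0 < m ∧ ¬ q ∣ m ∧ ∀ b : M, g ^ m • b - b ∈ Ω := by
  classical
  have hWinvt : ∀ (h : G), ∀ x ∈ W, h • x ∈ W := by
    intro h x hx
    have e : h • x = (h • x - x) + x := by abel
    rw [e]; exact W.add_mem (hWg h x) hx
  haveI hneι : Nonempty (stmt8Idx G M) :=
    ⟨⟨⊤, by simpa using isOpen_univ, fun _ x _ => AddSubgroup.mem_top _⟩⟩
  -- existence of a positive power of `g` in each kernel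
  have exist : ∀ i : stmt8Idx G M, ∃ m : ℕ, 0 < m ∧ g ^ m ∈ stmt8Ker G M i.1 := by
    intro i
    haveI : Finite (G ⧸ stmt8Ker G M i.1) :=
      Subgroup.quotient_finite_of_isOpen _ (stmt8Ker_isOpen i.1 i.2.1)
    obtain ⟨n₁, n₂, hne, heq⟩ := Finite.exists_ne_map_eq_of_infinite
      (fun n : ℕ => ((g ^ n : G) : G ⧸ stmt8Ker G M i.1))
    rcases Nat.lt_or_ge n₁ n₂ with hlt | hge
    · refine ⟨n₂ - n₁, by omega, ?_⟩
      have hmem := QuotientGroup.eq.mp heq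
      have e : (g ^ n₁)⁻¹ * g ^ n₂ = g ^ (n₂ - n₁) := by
        rw [← zpow_natCast g n₁, ← zpow_natCast g n₂, ← zpow_natCast g (n₂ - n₁),
          ← zpow_neg, ← zpow_add]
        congr 1
        omega
      rwa [e] at hmem
    · have hlt : n₂ < n₁ := by omega
      refine ⟨n₁ - n₂, by omega, ?_⟩
      have hmem := QuotientGroup.eq.mp heq.symm
      have e : (g ^ n₂)⁻¹ * g ^ n₁ = g ^ (n₁ - n₂) := by
        rw [← zpow_natCast g n₂, ← zpow_natCast g n₁, ← zpow_natCast g (n₁ - n₂),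
          ← zpow_neg, ← zpow_add]
        congr 1
        omega
      rwa [e] at hmem
  set mOf : stmt8Idx G M → ℕ := fun i => Nat.find (exist i) with hmOf
  have hmpos : ∀ i, 0 < mOf i := fun i => (Nat.find_spec (exist i)).1
  have hmmem : ∀ i, g ^ mOf i ∈ stmt8Ker G M i.1 := fun i => (Nat.find_spec (exist i)).2
  have hmdvd : ∀ i : stmt8Idx G M, ∀ n : ℕ, 0 < n → g ^ n ∈ stmt8Ker G M i.1 → mOf i ∣ n := by
    intro i n hn hgn
    by_contra hndvd
    have hmod : 0 < n % mOf i :=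
      Nat.pos_of_ne_zero (fun h => hndvd (Nat.dvd_of_mod_eq_zero h))
    have hmem2 : g ^ (n % mOf i) ∈ stmt8Ker G M i.1 := by
      have h1 : g ^ (mOf i * (n / mOf i)) ∈ stmt8Ker G M i.1 :=
        stmt8_pow_mem_of_dvd (hmmem i) ⟨n / mOf i, rfl⟩
      have e : g ^ (n % mOf i) = (g ^ (mOf i * (n / mOf i)))⁻¹ * g ^ n := by
        rw [← zpow_natCast g (n % mOf i), ← zpow_natCast g (mOf i * (n / mOf i)),
          ← zpow_natCast g n, ← zpow_neg, ← zpow_add]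
        congr 1
        have := Nat.div_add_mod n (mOf i)
        omega
      rw [e]
      exact (stmt8Ker G M i.1).mul_mem ((stmt8Ker G M i.1).inv_mem h1) hgn
    exact Nat.find_min (exist i) (Nat.mod_lt n (hmpos i)) ⟨hmod, hmem2⟩
  set cOf : stmt8Idx G M → ℕ := fun i => (mOf i).factorization q with hcOf
  set tOf : stmt8Idx G M → ℕ := fun i => q ^ cOf i with htOf
  set rOf : stmt8Idx G M → ℕ := fun i => mOf i / tOf i with hrOf
  have hco : ∀ i, (rOf i).Coprime (tOf i) :=
    fun i => Nat.Coprime.pow_right _ ((Nat.coprime_ordCompl hq (hmpos i).ne').symm)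
  set eOf : stmt8Idx G M → ℕ := fun i => (Nat.chineseRemainder (hco i) 0 1).1 with heOf
  have he0 : ∀ i, eOf i ≡ 0 [MOD rOf i] := fun i => (Nat.chineseRemainder (hco i) 0 1).2.1
  have he1 : ∀ i, eOf i ≡ 1 [MOD tOf i] := fun i => (Nat.chineseRemainder (hco i) 0 1).2.2
  set C : stmt8Idx G M → Set G := fun i => {h : G | (g ^ eOf i)⁻¹ * h ∈ stmt8Ker G M i.1}
    with hC
  have hCmono : ∀ i j : stmt8Idx G M, j.1 ≤ i.1 → C j ⊆ C i := by
    intro i j hle h hh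
    have hKle : stmt8Ker G M j.1 ≤ stmt8Ker G M i.1 := stmt8Ker_mono hle
    have hdvd : mOf i ∣ mOf j := hmdvd i (mOf j) (hmpos j) (hKle (hmmem j))
    have hmodeq : eOf i ≡ eOf j [MOD mOf i] :=
      (stmt8_NT hq (hmpos i).ne' (hmpos j).ne' hdvd (he0 i) (he1 i) (he0 j) (he1 j)).symm
    have h1 : (g ^ eOf i)⁻¹ * g ^ eOf j ∈ stmt8Ker G M i.1 :=
      stmt8_pow_mem_of_modEq (hmmem i) hmodeq
    have h2 : (g ^ eOf j)⁻¹ * h ∈ stmt8Ker G M i.1 := hKle hh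
    have e : (g ^ eOf i)⁻¹ * h = ((g ^ eOf i)⁻¹ * g ^ eOf j) * ((g ^ eOf j)⁻¹ * h) := by
      group
    show (g ^ eOf i)⁻¹ * h ∈ stmt8Ker G M i.1
    rw [e]
    exact (stmt8Ker G M i.1).mul_mem h1 h2
  have hCclosed : ∀ i, IsClosed (C i) := by
    intro i
    have he : C i = (fun h : G => (g ^ eOf i)⁻¹ * h) ⁻¹' ((stmt8Ker G M i.1 : Set G)) := rfl
    rw [he]
    exact (Subgroup.isClosed_of_isOpen _ (stmt8Ker_isOpen i.1 i.2.1)).preimage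
      (continuous_const.mul continuous_id)
  have hCne : ∀ i, (C i).Nonempty := by
    intro i
    refine ⟨g ^ eOf i, ?_⟩
    show (g ^ eOf i)⁻¹ * g ^ eOf i ∈ stmt8Ker G M i.1
    rw [inv_mul_cancel]
    exact (stmt8Ker G M i.1).one_mem
  have hCdir : Directed (· ⊇ ·) C := by
    intro i j
    have hk1 : IsOpen ((i.1 ⊓ j.1 : AddSubgroup M) : Set M) := by
      simpa [AddSubgroup.coe_inf] using i.2.1.inter j.2.1
    have hk2 : ∀ (g' : G), ∀ x ∈ i.1 ⊓ j.1, g' • x ∈ i.1 ⊓ j.1 := by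
      intro g' x hx
      exact AddSubgroup.mem_inf.mpr ⟨i.2.2 g' x (AddSubgroup.mem_inf.mp hx).1,
        j.2.2 g' x (AddSubgroup.mem_inf.mp hx).2⟩
    exact ⟨⟨i.1 ⊓ j.1, hk1, hk2⟩, hCmono i ⟨i.1 ⊓ j.1, hk1, hk2⟩ inf_le_left,
      hCmono j ⟨i.1 ⊓ j.1, hk1, hk2⟩ inf_le_right⟩
  obtain ⟨hstar, hhstar⟩ := IsCompact.nonempty_iInter_of_directed_nonempty_isCompact_isClosed
    C hCdir hCne (fun i => (hCclosed i).isCompact) hCclosed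
  have hstarmem : ∀ i : stmt8Idx G M, (g ^ eOf i)⁻¹ * hstar ∈ stmt8Ker G M i.1 :=
    fun i => Set.mem_iInter.mp hhstar i
  -- `hstar` acts trivially
  have hstar_triv : ∀ b : M, hstar • b = b := by
    apply stmt8_fixed_point h3 hstar W hWopen
    intro Ω' hΩ'open hΩ'invt
    have hk1 : IsOpen ((Ω' ⊓ W : AddSubgroup M) : Set M) := by
      simpa [AddSubgroup.coe_inf] using hΩ'open.inter hWopen
    have hk2 : ∀ (g' : G), ∀ x ∈ Ω' ⊓ W, g' • x ∈ Ω' ⊓ W := by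
      intro g' x hx
      exact AddSubgroup.mem_inf.mpr ⟨hΩ'invt g' x (AddSubgroup.mem_inf.mp hx).1,
        hWinvt g' x (AddSubgroup.mem_inf.mp hx).2⟩
    have hKnorm : (stmt8Ker G M (Ω' ⊓ W)).Normal := stmt8Ker_normal (Ω' ⊓ W) hk2
    set i : stmt8Idx G M := ⟨Ω' ⊓ W, hk1, hk2⟩ with hidef
    have hpowmem : hstar ^ tOf i ∈ stmt8Ker G M (Ω' ⊓ W) := by
      have h1 : ((g ^ eOf i) ^ tOf i)⁻¹ * hstar ^ tOf i ∈ stmt8Ker G M (Ω' ⊓ W) :=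
        stmt8_inv_pow_mul_pow_mem hKnorm (hstarmem i) (tOf i)
      have h2 : g ^ (eOf i * tOf i) ∈ stmt8Ker G M (Ω' ⊓ W) := by
        apply stmt8_pow_mem_of_dvd (hmmem i)
        have hre : rOf i ∣ eOf i := Nat.modEq_zero_iff_dvd.mp (he0 i)
        have hmeq : tOf i * rOf i = mOf i := Nat.ordProj_mul_ordCompl_eq_self (mOf i) q
        obtain ⟨s, hs⟩ := hre
        exact ⟨s, by rw [← hmeq, hs]; ring⟩
      rw [pow_mul] at h2
      have h3' := (stmt8Ker G M (Ω' ⊓ W)).mul_mem h2 h1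
      rwa [mul_inv_cancel_left] at h3'
    refine ⟨∑ n ∈ Finset.range (tOf i), hstar ^ n • a₀, ?_, ?_⟩
    · intro hmem
      have hsub : (∑ n ∈ Finset.range (tOf i), hstar ^ n • a₀) - tOf i • a₀ ∈ W := by
        have e : (∑ n ∈ Finset.range (tOf i), hstar ^ n • a₀) - tOf i • a₀
            = ∑ n ∈ Finset.range (tOf i), (hstar ^ n • a₀ - a₀) := by
          rw [Finset.sum_sub_distrib, Finset.sum_const, Finset.card_range]
        rw [e]
        exact AddSubgroup.sum_mem _ (fun n _ => hWg (hstar ^ n) a₀)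
      have hta : tOf i • a₀ ∈ W := by
        have e : tOf i • a₀ = (∑ n ∈ Finset.range (tOf i), hstar ^ n • a₀)
            - ((∑ n ∈ Finset.range (tOf i), hstar ^ n • a₀) - tOf i • a₀) := by abel
        rw [e]; exact W.sub_mem hmem hsub
      have hcop : Nat.Coprime (tOf i) p :=
        Nat.Coprime.pow_left _ ((Nat.coprime_primes hq hp).mpr hqp)
      obtain ⟨u, vv, huv⟩ := Nat.isCoprime_iff_coprime.mpr hcop
      have hmem2 : a₀ ∈ W := by
        have e : a₀ = u • ((tOf i : ℤ) • a₀) + vv • ((p : ℤ) • a₀) := by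
          rw [smul_smul, smul_smul, ← add_smul, huv, one_smul]
        rw [e]
        refine W.add_mem (W.zsmul_mem ?_ u) (W.zsmul_mem ?_ vv)
        · rw [natCast_zsmul]; exact hta
        · rw [natCast_zsmul]; exact hWp a₀
      exact ha₀ hmem2
    · rw [stmt8_telescope]
      exact (AddSubgroup.mem_inf.mp ((stmt8Ker_mem_iff.mp hpowmem) a₀)).1
  -- hence `g ^ eOf i` lies in every kernel
  have hge : ∀ i : stmt8Idx G M, g ^ eOf i ∈ stmt8Ker G M i.1 := by
    intro i
    have h1 : ∀ b : M, (g ^ eOf i)⁻¹ • b - b ∈ i.1 := by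
      intro b
      have h2 := (stmt8Ker_mem_iff.mp (hstarmem i)) b
      rwa [mul_smul, hstar_triv b] at h2
    have h4 : (g ^ eOf i)⁻¹ ∈ stmt8Ker G M i.1 := stmt8Ker_mem_iff.mpr h1
    exact (stmt8Ker G M i.1).inv_mem_iff.mp h4
  -- conclude
  refine ⟨mOf ⟨Ω, hΩopen, hΩinvt⟩, hmpos _, ?_,
    fun b => (stmt8Ker_mem_iff.mp (hmmem ⟨Ω, hΩopen, hΩinvt⟩)) b⟩
  intro hqdvd
  set i₀ : stmt8Idx G M := ⟨Ω, hΩopen, hΩinvt⟩ with hi₀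
  have hc : 0 < cOf i₀ := hq.factorization_pos_of_dvd (hmpos i₀).ne' hqdvd
  have ht1 : 1 < tOf i₀ := Nat.one_lt_pow hc.ne' hq.one_lt
  have hepos : 0 < eOf i₀ := by
    rcases Nat.eq_zero_or_pos (eOf i₀) with h0 | h
    · exfalso
      have h1 := he1 i₀
      rw [h0] at h1
      have h01 : 0 % tOf i₀ = 1 % tOf i₀ := h1
      rw [Nat.zero_mod, Nat.mod_eq_of_lt ht1] at h01
      exact Nat.zero_ne_one h01
    · exact h
  have hme : mOf i₀ ∣ eOf i₀ := hmdvd i₀ (eOf i₀) hepos (hge i₀)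
  have hqe : q ∣ eOf i₀ := dvd_trans hqdvd hme
  have hmod1 : eOf i₀ ≡ 1 [MOD q] := (he1 i₀).of_dvd (dvd_pow_self q hc.ne')
  have hmod0 : eOf i₀ ≡ 0 [MOD q] := Nat.modEq_zero_iff_dvd.mpr hqe
  have h01' : (0 : ℕ) ≡ 1 [MOD q] := hmod0.symm.trans hmod1
  have h01 : 0 % q = 1 % q := h01'
  rw [Nat.zero_mod, Nat.mod_eq_of_lt hq.one_lt] at h01
  exact Nat.zero_ne_one h01

end Stmt8Aux

/-- Lemma 4.6 of [S]: let `G` be a profinite group acting continuously on a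
profinite abelian group `M`, with `C = C_G(M)` the kernel of the action.
If (1) the closed subgroup `pM + M(G-1)` is proper, (2) the intersection of the
closed subgroups `M(g-1)` over `g ∈ G \ C` is zero, and (3) `C_G(a) = C` for
every nonzero `a ∈ M`, then `M` is a pro-`p` group (every open subgroup has
`p`-power index). -/
theorem stmt8 (p : ℕ) [Fact p.Prime]
    (G : Type*) [Group G] [TopologicalSpace G] [IsTopologicalGroup G]
    [CompactSpace G] [TotallyDisconnectedSpace G] [T2Space G]
    (M : Type*) [AddCommGroup M] [TopologicalSpace M] [IsTopologicalAddGroup M]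
    [CompactSpace M] [TotallyDisconnectedSpace M] [T2Space M]
    [DistribMulAction G M] [ContinuousSMul G M]
    (h1 : (AddSubgroup.closure
        {w : M | (∃ a : M, w = p • a) ∨ ∃ (g : G) (a : M), w = g • a - a}
        ).topologicalClosure ≠ ⊤)
    (h2 : ∀ a : M,
      (∀ g : G, (∃ b : M, g • b ≠ b) →
        a ∈ (AddSubgroup.closure {w : M | ∃ b : M, w = g • b - b}
          ).topologicalClosure) → a = 0)
    (h3 : ∀ a : M, a ≠ 0 → ∀ g : G, g • a = a → ∀ b : M, g • b = b) :
    ∀ U : AddSubgroup M, IsOpen (U : Set M) →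
      ∃ n : ℕ, Nat.card (M ⧸ U) = p ^ n := by
  intro U hU
  have hp : p.Prime := Fact.out
  haveI hfin : Finite (M ⧸ U) := AddSubgroup.quotient_finite_of_isOpen U hU
  haveI : Nonempty (M ⧸ U) := ⟨0⟩
  -- construct the open invariant subgroup W from h1
  set N : AddSubgroup M := (AddSubgroup.closure
      {w : M | (∃ a : M, w = p • a) ∨ ∃ (g : G) (a : M), w = g • a - a}).topologicalClosure
      with hNdef
  have hNne : N ≠ ⊤ := h1
  have hNclosed : IsClosed (N : Set M) := AddSubgroup.isClosed_topologicalClosure _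
  obtain ⟨a₀, ha₀N⟩ : ∃ a₀, a₀ ∉ N := by
    by_contra hc
    push_neg at hc
    exact hNne ((AddSubgroup.eq_top_iff' N).mpr hc)
  have hmemnhds : {z : M | a₀ + z ∈ (N : Set M)ᶜ} ∈ nhds (0 : M) := by
    have hco : Continuous fun z : M => a₀ + z := continuous_const.add continuous_id
    have ho : IsOpen ((N : Set M)ᶜ) := hNclosed.isOpen_compl
    exact (ho.preimage hco).mem_nhds (by simpa using ha₀N)
  obtain ⟨Ω₁, hΩ₁open, hΩ₁sub⟩ := stmt8_exists_openAddSubgroup_subset hmemnhds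
  set W : AddSubgroup M := N ⊔ Ω₁ with hWdef
  have hWopen : IsOpen (W : Set M) := AddSubgroup.isOpen_mono le_sup_right hΩ₁open
  have hWg : ∀ (h : G) (x : M), h • x - x ∈ W := fun h x =>
    (le_sup_left : N ≤ W) (AddSubgroup.le_topologicalClosure _
      (AddSubgroup.subset_closure (Or.inr ⟨h, x, rfl⟩)))
  have hWp : ∀ x : M, p • x ∈ W := fun x =>
    (le_sup_left : N ≤ W) (AddSubgroup.le_topologicalClosure _
      (AddSubgroup.subset_closure (Or.inl ⟨x, rfl⟩)))
  have hWa₀ : a₀ ∉ W := by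
    intro hmem
    rw [hWdef, AddSubgroup.mem_sup] at hmem
    obtain ⟨y, hy, z, hz, hyz⟩ := hmem
    have h1' : a₀ + (-z) ∈ (N : Set M)ᶜ := hΩ₁sub (Ω₁.neg_mem hz)
    apply h1'
    have e : a₀ + -z = y := by rw [← hyz]; abel
    rw [e]
    exact hy
  -- every prime divisor of the index is p
  have main : ∀ q : ℕ, q.Prime → q ∣ Nat.card (M ⧸ U) → q = p := by
    intro q hq hdvd
    by_contra hqp
    haveI : Fintype (M ⧸ U) := Fintype.ofFinite _
    rw [Nat.card_eq_fintype_card] at hdvd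
    haveI : Fact q.Prime := ⟨hq⟩
    obtain ⟨x, hx⟩ := exists_prime_addOrderOf_dvd_card q hdvd
    have hxne : x ≠ 0 := by
      intro h0
      rw [h0, addOrderOf_zero] at hx
      exact absurd hx.symm hq.one_lt.ne'
    -- construct a nonzero q-primary element a of M mapping to x
    haveI hneκ : Nonempty {k : ℕ // Nat.Coprime k q} := ⟨⟨1, Nat.coprime_one_left q⟩⟩
    set F : {k : ℕ // Nat.Coprime k q} → Set M :=
      fun k => {y : M | ((y : M ⧸ U) = x) ∧ ∃ b : M, (k : ℕ) • b = y} with hF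
    have hFclosed : ∀ k, IsClosed (F k) := by
      intro k
      have h1' : IsClosed {y : M | (y : M ⧸ U) = x} := by
        obtain ⟨a', ha'⟩ := QuotientAddGroup.mk_surjective x
        have e : {y : M | (y : M ⧸ U) = x} = (fun y : M => -y + a') ⁻¹' (U : Set M) := by
          ext y
          simp only [Set.mem_setOf_eq, Set.mem_preimage, SetLike.mem_coe, ← ha']
          exact QuotientAddGroup.eq
        rw [e]
        exact (AddSubgroup.isClosed_of_isOpen U hU).preimage
          (continuous_id.neg.add continuous_const)
      have h2' : IsClosed {y : M | ∃ b : M, (k : ℕ) • b = y} :=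
        (isCompact_range (continuous_nsmul (k : ℕ))).isClosed
      exact h1'.inter h2'
    have hFne : ∀ k, (F k).Nonempty := by
      intro k
      obtain ⟨n'', -, hn''⟩ := Nat.exists_mul_mod_eq_one_of_coprime k.2 hq.one_lt
      obtain ⟨b, hb⟩ := QuotientAddGroup.mk_surjective ((n'' : ℕ) • x)
      refine ⟨(k : ℕ) • b, ?_, ⟨b, rfl⟩⟩
      show (((k : ℕ) • b : M) : M ⧸ U) = x
      have hqx : q • x = 0 := by rw [← hx]; exact addOrderOf_nsmul_eq_zero x
      have e1 : (((k : ℕ) • b : M) : M ⧸ U) = (k : ℕ) • ((b : M) : M ⧸ U) :=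
        map_nsmul (QuotientAddGroup.mk' U) (k : ℕ) b
      rw [e1, hb, smul_smul]
      have hd : (k : ℕ) * n'' = ((k : ℕ) * n'' / q) * q + 1 := by
        conv_lhs => rw [← Nat.div_add_mod ((k : ℕ) * n'') q, hn'']
        ring
      rw [hd, add_nsmul, one_nsmul, ← smul_smul, hqx, smul_zero, zero_add]
    have hFdir : Directed (· ⊇ ·) F := by
      intro k l
      refine ⟨⟨(k : ℕ) * (l : ℕ), Nat.Coprime.mul k.2 l.2⟩, ?_, ?_⟩
      · rintro y ⟨hy1, b, hb⟩
        exact ⟨hy1, ⟨(l : ℕ) • b, by rw [smul_smul]; exact hb⟩⟩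
      · rintro y ⟨hy1, b, hb⟩
        refine ⟨hy1, ⟨(k : ℕ) • b, ?_⟩⟩
        rw [smul_smul, mul_comm]
        exact hb
    obtain ⟨a, ha⟩ := IsCompact.nonempty_iInter_of_directed_nonempty_isCompact_isClosed
      F hFdir hFne (fun k => (hFclosed k).isCompact) hFclosed
    have haprop : ∀ k : {k : ℕ // Nat.Coprime k q},
        ((a : M ⧸ U) = x ∧ ∃ b : M, (k : ℕ) • b = a) := fun k => Set.mem_iInter.mp ha k
    have hax : (a : M ⧸ U) = x := (haprop ⟨1, Nat.coprime_one_left q⟩).1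
    have hane : a ≠ 0 := by
      intro h0
      rw [h0, QuotientAddGroup.mk_zero] at hax
      exact hxne hax.symm
    -- the key membership for h2
    have key : ∀ g : G, (∃ b : M, g • b ≠ b) →
        a ∈ (AddSubgroup.closure {w : M | ∃ b : M, w = g • b - b}).topologicalClosure := by
      intro g hg
      have approx : ∀ Ω : AddSubgroup M, IsOpen (Ω : Set M) →
          (∀ h : G, ∀ y ∈ Ω, h • y ∈ Ω) →
          ∃ s ∈ AddSubgroup.closure {w : M | ∃ b : M, w = g • b - b}, a - s ∈ Ω := by
        by_contra hcon
        push_neg at hcon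
        obtain ⟨Ω₀, hΩ₀open, hΩ₀invt, h₀⟩ := hcon
        have hFP : ∀ b : M, g • b = b := by
          apply stmt8_fixed_point h3 g Ω₀ hΩ₀open
          intro Ω hΩopen hΩinvt
          have hk1 : IsOpen ((Ω ⊓ Ω₀ : AddSubgroup M) : Set M) := by
            simpa [AddSubgroup.coe_inf] using hΩopen.inter hΩ₀open
          have hk2 : ∀ (h : G), ∀ y ∈ Ω ⊓ Ω₀, h • y ∈ Ω ⊓ Ω₀ := by
            intro h y hy
            exact AddSubgroup.mem_inf.mpr ⟨hΩinvt h y (AddSubgroup.mem_inf.mp hy).1,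
              hΩ₀invt h y (AddSubgroup.mem_inf.mp hy).2⟩
          haveI hfin2 : Finite (M ⧸ (Ω ⊓ Ω₀ : AddSubgroup M)) :=
            AddSubgroup.quotient_finite_of_isOpen _ hk1
          haveI : Nonempty (M ⧸ (Ω ⊓ Ω₀ : AddSubgroup M)) := ⟨0⟩
          set nA : ℕ := Nat.card (M ⧸ (Ω ⊓ Ω₀ : AddSubgroup M)) with hnA
          have hnA0 : nA ≠ 0 := Nat.card_pos.ne'
          set v : ℕ := nA.factorization q with hv
          have hqva : q ^ v • a ∈ (Ω ⊓ Ω₀ : AddSubgroup M) := by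
            have hkco : Nat.Coprime (nA / q ^ v) q := (Nat.coprime_ordCompl hq hnA0).symm
            obtain ⟨-, b, hb⟩ := haprop ⟨nA / q ^ v, hkco⟩
            have hmm : q ^ v * (nA / q ^ v) = nA := Nat.ordProj_mul_ordCompl_eq_self nA q
            have e : q ^ v • a = nA • b := by
              rw [← hb, smul_smul, hmm]
            rw [e]
            have h0 : ((nA • b : M) : M ⧸ (Ω ⊓ Ω₀ : AddSubgroup M)) = 0 := by
              have e2 : ((nA • b : M) : M ⧸ (Ω ⊓ Ω₀ : AddSubgroup M))
                  = nA • ((b : M) : M ⧸ (Ω ⊓ Ω₀ : AddSubgroup M)) :=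
                map_nsmul (QuotientAddGroup.mk' _) nA b
              rw [e2, hnA]
              exact card_nsmul_eq_zero'
            exact (QuotientAddGroup.eq_zero_iff _).mp h0
          by_cases hv0 : v = 0
          · exfalso
            have hmem : a ∈ (Ω ⊓ Ω₀ : AddSubgroup M) := by
              have h5 := hqva
              rw [hv0, pow_zero, one_smul] at h5
              exact h5
            have h6 := h₀ 0 (AddSubgroup.zero_mem _)
            rw [sub_zero] at h6
            exact h6 (AddSubgroup.mem_inf.mp hmem).2
          · obtain ⟨m, hmpos, hmq, hgm⟩ := stmt8_order_coprime hp hq hqp W hWopen hWg hWp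
              a₀ hWa₀ h3 g (Ω ⊓ Ω₀) hk1 hk2
            have hcopm : Nat.Coprime m (q ^ v) :=
              Nat.Coprime.pow_right _ (((Nat.Prime.coprime_iff_not_dvd hq).mpr hmq).symm)
            obtain ⟨n', -, hn'⟩ := Nat.exists_mul_mod_eq_one_of_coprime hcopm
              (Nat.one_lt_pow hv0 hq.one_lt)
            refine ⟨n' • ∑ i ∈ Finset.range m, g ^ i • a, ?_, ?_⟩
            · -- not in Ω₀
              intro hyΩ₀
              have hs1 : m • a - (∑ i ∈ Finset.range m, g ^ i • a) ∈
                  AddSubgroup.closure {w : M | ∃ b : M, w = g • b - b} := by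
                have e : m • a - (∑ i ∈ Finset.range m, g ^ i • a)
                    = ∑ i ∈ Finset.range m, (a - g ^ i • a) := by
                  rw [Finset.sum_sub_distrib, Finset.sum_const, Finset.card_range]
                rw [e]
                refine AddSubgroup.sum_mem _ (fun i _ => ?_)
                have h7 := (AddSubgroup.closure
                  {w : M | ∃ b : M, w = g • b - b}).neg_mem (stmt8_pow_smul_sub_mem g a i)
                rwa [neg_sub] at h7
              have hsSR : n' • (m • a - (∑ i ∈ Finset.range m, g ^ i • a)) ∈
                  AddSubgroup.closure {w : M | ∃ b : M, w = g • b - b} :=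
                AddSubgroup.nsmul_mem _ hs1 n'
              have h8 := h₀ _ hsSR
              apply h8
              -- a - s ∈ Ω₀
              have hkey : (m * n') • a - a ∈ (Ω ⊓ Ω₀ : AddSubgroup M) := by
                have hd : m * n' = (m * n' / q ^ v) * (q ^ v) + 1 := by
                  conv_lhs => rw [← Nat.div_add_mod (m * n') (q ^ v), hn']
                  ring
                have e : (m * n') • a - a = (m * n' / q ^ v) • (q ^ v • a) := by
                  rw [smul_smul]
                  nth_rewrite 1 [hd]
                  rw [add_nsmul, one_nsmul]
                  abel
                rw [e]
                exact AddSubgroup.nsmul_mem _ hqva _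
              have e2 : a - n' • (m • a - (∑ i ∈ Finset.range m, g ^ i • a))
                  = (a - (m * n') • a) + n' • (∑ i ∈ Finset.range m, g ^ i • a) := by
                rw [nsmul_sub, smul_smul, mul_comm n' m]
                abel
              rw [e2]
              refine Ω₀.add_mem ?_ hyΩ₀
              have h9 := (Ω ⊓ Ω₀ : AddSubgroup M).neg_mem hkey
              rw [neg_sub] at h9
              exact (AddSubgroup.mem_inf.mp h9).2
            · -- g • y - y ∈ Ω
              have h1' := (DistribMulAction.toAddMonoidHom M g).map_nsmul
                n' (∑ i ∈ Finset.range m, g ^ i • a)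
              simp only [DistribMulAction.toAddMonoidHom_apply] at h1'
              rw [h1', ← nsmul_sub, stmt8_telescope]
              exact AddSubgroup.nsmul_mem _ ((AddSubgroup.mem_inf.mp (hgm a)).1) n'
        obtain ⟨b, hb⟩ := hg
        exact hb (hFP b)
      -- conclude the closure membership
      have hmemcl : a ∈ closure
          ((AddSubgroup.closure {w : M | ∃ b : M, w = g • b - b} : AddSubgroup M) : Set M) := by
        rw [mem_closure_iff]
        intro o ho hao
        have hnhd : {z : M | a + z ∈ o} ∈ nhds (0 : M) :=
          ((ho.preimage (continuous_const.add continuous_id)).mem_nhds (by simpa using hao))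
        obtain ⟨Ω₂, h₂o, h₂s⟩ := stmt8_exists_openAddSubgroup_subset hnhd
        obtain ⟨Ω₃, h₃o, h₃le, h₃invt⟩ := stmt8_exists_invariant_open_le (G := G) Ω₂ h₂o
        obtain ⟨s, hsSR, hsΩ⟩ := approx Ω₃ h₃o h₃invt
        refine ⟨s, ?_, hsSR⟩
        have h4 : s - a ∈ Ω₂ := by
          have h5 := Ω₃.neg_mem hsΩ
          rw [neg_sub] at h5
          exact h₃le h5
        have h5 := h₂s h4
        simpa using h5
      rw [← AddSubgroup.topologicalClosure_coe] at hmemcl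
      exact hmemcl
    exact hane (h2 a key)
  have hc0 : Nat.card (M ⧸ U) ≠ 0 := Nat.card_pos.ne'
  exact ⟨(Nat.card (M ⧸ U)).primeFactorsList.length,
    Nat.eq_prime_pow_of_unique_prime_dvd hc0 (fun {d} hd hdd => main d hd hdd)⟩
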